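/- Let P be an ergodic transition matrix on a finite state space with stationary distribution π and mixing time τ(γ) = max_u min{t : D_tv(P^t_{u,·}, π) ≤ γ}. Then for any state v, any T > 0, and any γ with 0 < γ < 1/2: Σ_{t=0}^{T−1} D_tv(P^t_{v,·}, π) ≤ ((1−γ)/(1−2γ)) · τ(γ). -/

import Mathlib

open Finset

/-- Lemma (SYKY13, Lemma 4.2): for an ergodic `P` with stationary distribution `π`,
`Σ_{t=0}^{T−1} D_tv(P^t_{v,·}, π) ≤ ((1−γ)/(1−2γ)) τ(γ)` for any `0 < γ < 1/2`. -/
theorem dtv_sum_le_mixing {V : Type*} [Fintype V] [DecidableEq V] [Nonempty V]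
    (P : Matrix V V ℝ) (π : V → ℝ)
    (hP0 : ∀ u v, 0 ≤ P u v) (hP1 : ∀ u, ∑ v, P u v = 1)
    (herg : ∃ t0 : ℕ, ∀ u v, 0 < (P ^ t0) u v)
    (hπ0 : ∀ v, 0 ≤ π v) (hπ1 : ∑ v, π v = 1)
    (hstat : ∀ v, ∑ u, π u * P u v = π v)
    (Dtv : (V → ℝ) → (V → ℝ) → ℝ)
    (hD : ∀ ξ ζ, Dtv ξ ζ = (1 / 2) * ∑ v, |ξ v - ζ v|)
    (γ : ℝ) (hγ : 0 < γ) (hγ2 : γ < 1 / 2)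
    (τ : ℕ)
    (hτ : τ = univ.sup fun u => sInf {t : ℕ | Dtv (fun v => (P ^ t) u v) π ≤ γ})
    (v : V) (T : ℕ) (hT : 0 < T) :
    ∑ t ∈ range T, Dtv (fun w => (P ^ t) v w) π ≤ ((1 - γ) / (1 - 2 * γ)) * τ := by
  have hrow : ∀ (t : ℕ) (u : V), ∑ x, (P ^ t) u x = 1 := by
    intro t
    induction t with
    | zero => intro u; simp [Matrix.one_apply]
    | succ t ih =>
      intro u
      simp only [pow_succ, Matrix.mul_apply]
      rw [Finset.sum_comm]
      calc ∑ w, ∑ x, (P ^ t) u w * P w x = ∑ w, (P ^ t) u w * ∑ x, P w x := by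
            simp [Finset.mul_sum]
        _ = 1 := by simp [hP1, ih u]
  have hpos : ∀ (t : ℕ) (u x : V), 0 ≤ (P ^ t) u x := by
    intro t
    induction t with
    | zero => intro u x; simp [Matrix.one_apply]; positivity
    | succ t ih =>
      intro u x
      simp only [pow_succ, Matrix.mul_apply]
      exact Finset.sum_nonneg fun w _ => mul_nonneg (ih u w) (hP0 w x)
  have hstatt : ∀ (t : ℕ) (x : V), ∑ u, π u * (P ^ t) u x = π x := by
    intro t
    induction t with
    | zero => intro x; simp [Matrix.one_apply]
    | succ t ih =>
      intro x
      simp only [pow_succ, Matrix.mul_apply]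
      calc ∑ u, π u * ∑ w, (P ^ t) u w * P w x
          = ∑ u, ∑ w, π u * (P ^ t) u w * P w x := by
            simp [Finset.mul_sum, mul_assoc]
        _ = ∑ w, ∑ u, π u * (P ^ t) u w * P w x := Finset.sum_comm
        _ = ∑ w, (∑ u, π u * (P ^ t) u w) * P w x := by simp [Finset.sum_mul]
        _ = π x := by simp [ih, hstat]
  -- `S t u` is twice the TV distance between row `u` of `P^t` and `π`.
  set S : ℕ → V → ℝ := fun t u => ∑ x, |(P ^ t) u x - π x| with hS
  have hS0 : ∀ t u, 0 ≤ S t u := fun t u =>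
    Finset.sum_nonneg fun x _ => abs_nonneg _
  have hDS : ∀ t u, Dtv (fun x => (P ^ t) u x) π = (1 / 2) * S t u := by
    intro t u; rw [hD]
  have hsum0 : ∀ (t : ℕ) (u : V), ∑ w, ((P ^ t) u w - π w) = 0 := by
    intro t u
    rw [Finset.sum_sub_distrib, hrow t u, hπ1, sub_self]
  have hπle1 : ∀ x, π x ≤ 1 := by
    intro x
    rw [← hπ1]
    exact Finset.single_le_sum (fun w _ => hπ0 w) (mem_univ x)
  have hSle2 : ∀ t u, S t u ≤ 2 := by
    intro t u
    calc S t u ≤ ∑ x, ((P ^ t) u x + π x) := by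
          apply Finset.sum_le_sum
          intro x _
          calc |(P ^ t) u x - π x| ≤ |(P ^ t) u x| + |π x| := abs_sub _ _
            _ = (P ^ t) u x + π x := by
                rw [abs_of_nonneg (hpos t u x), abs_of_nonneg (hπ0 x)]
      _ = 2 := by rw [Finset.sum_add_distrib, hrow t u, hπ1]; norm_num
  have hsplit2 : ∀ (t s : ℕ) (u x : V),
      (P ^ (t + s)) u x - π x = ∑ w, ((P ^ t) u w - π w) * (P ^ s) w x := by
    intro t s u x
    have h1 : (P ^ (t + s)) u x = ∑ w, (P ^ t) u w * (P ^ s) w x := by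
      rw [pow_add, Matrix.mul_apply]
    rw [h1]
    have h2 : π x = ∑ w, π w * (P ^ s) w x := (hstatt s x).symm
    rw [h2, ← Finset.sum_sub_distrib]
    congr 1; ext w; ring
  have hmono : ∀ (t s : ℕ) (u : V), S (t + s) u ≤ S t u := by
    intro t s u
    calc S (t + s) u = ∑ x, |∑ w, ((P ^ t) u w - π w) * (P ^ s) w x| := by
          simp only [hS]; congr 1; ext x; rw [hsplit2]
      _ ≤ ∑ x, ∑ w, |(P ^ t) u w - π w| * (P ^ s) w x := by
          apply Finset.sum_le_sum
          intro x _
          refine (Finset.abs_sum_le_sum_abs _ _).trans ?_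
          apply Finset.sum_le_sum
          intro w _
          rw [abs_mul, abs_of_nonneg (hpos s w x)]
      _ = ∑ w, |(P ^ t) u w - π w| * ∑ x, (P ^ s) w x := by
          rw [Finset.sum_comm]; simp [Finset.mul_sum]
      _ = S t u := by simp [hrow s, hS]
  have hsplit3 : ∀ (t s : ℕ) (u x : V),
      (P ^ (t + s)) u x - π x = ∑ w, ((P ^ t) u w - π w) * ((P ^ s) w x - π x) := by
    intro t s u x
    have : ∑ w, ((P ^ t) u w - π w) * ((P ^ s) w x - π x)
        = (∑ w, ((P ^ t) u w - π w) * (P ^ s) w x)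
          - (∑ w, ((P ^ t) u w - π w)) * π x := by
      rw [Finset.sum_mul, ← Finset.sum_sub_distrib]
      congr 1; ext w; ring
    rw [this, hsum0, hsplit2 t s u x]; ring
  -- submultiplicativity-type bound
  have hsub : ∀ (a b : ℕ) (u : V) (B : ℝ), (∀ w, S b w ≤ B) →
      S (a + b) u ≤ B * S a u := by
    intro a b u B hB
    calc S (a + b) u = ∑ x, |∑ w, ((P ^ a) u w - π w) * ((P ^ b) w x - π x)| := by
          simp only [hS]; congr 1; ext x; rw [hsplit3]
      _ ≤ ∑ x, ∑ w, |(P ^ a) u w - π w| * |(P ^ b) w x - π x| := by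
          apply Finset.sum_le_sum
          intro x _
          refine (Finset.abs_sum_le_sum_abs _ _).trans ?_
          apply Finset.sum_le_sum
          intro w _
          rw [abs_mul]
      _ = ∑ w, |(P ^ a) u w - π w| * S b w := by
          rw [Finset.sum_comm]; simp [Finset.mul_sum, hS]
      _ ≤ ∑ w, |(P ^ a) u w - π w| * B := by
          apply Finset.sum_le_sum
          intro w _
          exact mul_le_mul_of_nonneg_left (hB w) (abs_nonneg _)
      _ = B * S a u := by rw [← Finset.sum_mul, hS, mul_comm]
  -- ergodicity: the sets defining the mixing time are nonempty
  obtain ⟨t0, ht0⟩ := herg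
  have hne : ∀ u : V, {t : ℕ | Dtv (fun x => (P ^ t) u x) π ≤ γ}.Nonempty := by
    intro u
    classical
    set δ : ℝ := Finset.inf' Finset.univ (by simp [Finset.univ_nonempty])
        (fun p : V × V => (P ^ t0) p.1 p.2) with hδ
    have hδpos : 0 < δ := by
      rw [hδ, Finset.lt_inf'_iff]
      intro p _
      exact ht0 p.1 p.2
    have hδle : ∀ w x, δ ≤ (P ^ t0) w x := by
      intro w x
      exact Finset.inf'_le _ (Finset.mem_univ (w, x))
    set c : ℝ := 1 - (Fintype.card V : ℝ) * δ with hc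
    have hcrow : ∀ w : V, ∑ x, ((P ^ t0) w x - δ) = c := by
      intro w
      rw [Finset.sum_sub_distrib, hrow t0 w, Finset.sum_const]
      simp [hc, mul_comm]
    have hc0 : 0 ≤ c := by
      obtain ⟨w⟩ := ‹Nonempty V›
      rw [← hcrow w]
      exact Finset.sum_nonneg fun x _ => sub_nonneg.2 (hδle w x)
    have hc1 : c < 1 := by
      have : 0 < (Fintype.card V : ℝ) * δ :=
        mul_pos (by exact_mod_cast Fintype.card_pos) hδpos
      simp only [hc]; linarith
    have hcontr : ∀ (t : ℕ) (u : V), S (t + t0) u ≤ c * S t u := by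
      intro t u
      have key : ∀ x, (P ^ (t + t0)) u x - π x
          = ∑ w, ((P ^ t) u w - π w) * ((P ^ t0) w x - δ) := by
        intro x
        have : ∑ w, ((P ^ t) u w - π w) * ((P ^ t0) w x - δ)
            = (∑ w, ((P ^ t) u w - π w) * (P ^ t0) w x)
              - (∑ w, ((P ^ t) u w - π w)) * δ := by
          rw [Finset.sum_mul, ← Finset.sum_sub_distrib]
          congr 1; ext w; ring
        rw [this, hsum0, hsplit2 t t0 u x]; ring
      calc S (t + t0) u = ∑ x, |∑ w, ((P ^ t) u w - π w) * ((P ^ t0) w x - δ)| := by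
            simp only [hS]; congr 1; ext x; rw [key]
        _ ≤ ∑ x, ∑ w, |(P ^ t) u w - π w| * ((P ^ t0) w x - δ) := by
            apply Finset.sum_le_sum
            intro x _
            refine (Finset.abs_sum_le_sum_abs _ _).trans ?_
            apply Finset.sum_le_sum
            intro w _
            rw [abs_mul, abs_of_nonneg (sub_nonneg.2 (hδle w x))]
        _ = ∑ w, |(P ^ t) u w - π w| * ∑ x, ((P ^ t0) w x - δ) := by
            rw [Finset.sum_comm]
            exact Finset.sum_congr rfl fun w _ => (Finset.mul_sum _ _ _).symm
        _ = c * S t u := by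
            simp only [hcrow]
            rw [← Finset.sum_mul, hS, mul_comm]
    have hk : ∀ k : ℕ, S (k * t0) u ≤ 2 * c ^ k := by
      intro k
      induction k with
      | zero => simpa using hSle2 0 u
      | succ k ih =>
        have : S ((k + 1) * t0) u ≤ c * S (k * t0) u := by
          have : (k + 1) * t0 = k * t0 + t0 := by ring
          rw [this]
          exact hcontr (k * t0) u
        calc S ((k + 1) * t0) u ≤ c * S (k * t0) u := this
          _ ≤ c * (2 * c ^ k) := mul_le_mul_of_nonneg_left ih hc0
          _ = 2 * c ^ (k + 1) := by ring
    obtain ⟨k, hkγ⟩ := exists_pow_lt_of_lt_one hγ hc1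
    refine ⟨k * t0, ?_⟩
    show Dtv (fun x => (P ^ (k * t0)) u x) π ≤ γ
    rw [hDS]
    calc (1 / 2) * S (k * t0) u ≤ (1 / 2) * (2 * c ^ k) := by
          have := hk k; linarith
      _ = c ^ k := by ring
      _ ≤ γ := le_of_lt hkγ
  -- the mixing time bound: S τ u ≤ 2γ for every u
  have hSτ : ∀ u : V, S τ u ≤ 2 * γ := by
    intro u
    have hmem : Dtv (fun x => (P ^ (sInf {t : ℕ | Dtv (fun x => (P ^ t) u x) π ≤ γ})) u x) π ≤ γ :=
      Nat.sInf_mem (hne u)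
    set m := sInf {t : ℕ | Dtv (fun x => (P ^ t) u x) π ≤ γ} with hm
    have hmτ : m ≤ τ := by
      rw [hτ, hm]
      exact Finset.le_sup (f := fun u => sInf {t : ℕ | Dtv (fun v => (P ^ t) u v) π ≤ γ})
        (Finset.mem_univ u)
    have h1 : S m u ≤ 2 * γ := by
      rw [hDS] at hmem; linarith
    calc S τ u = S (m + (τ - m)) u := by rw [Nat.add_sub_cancel' hmτ]
      _ ≤ S m u := hmono m (τ - m) u
      _ ≤ 2 * γ := h1
  by_cases hτ0 : τ = 0
  · -- degenerate case: V must be a singleton and everything is 0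
    have hπhalf : ∀ u : V, 1 / 2 < π u := by
      intro u
      have h2 : S 0 u ≤ 2 * γ := hτ0 ▸ hSτ u
      have hcalc : S 0 u = (1 - π u) + ∑ x ∈ univ.erase u, π x := by
        show ∑ x, |(P ^ (0:ℕ)) u x - π x| = (1 - π u) + ∑ x ∈ univ.erase u, π x
        rw [← Finset.add_sum_erase _ _ (Finset.mem_univ u)]
        congr 1
        · simp only [pow_zero, Matrix.one_apply_eq]
          rw [abs_of_nonneg (by linarith [hπle1 u])]
        · apply Finset.sum_congr rfl
          intro x hx
          have hxu : x ≠ u := Finset.ne_of_mem_erase hx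
          simp only [pow_zero]
          rw [Matrix.one_apply_ne' hxu]
          rw [abs_of_nonpos (by linarith [hπ0 x])]
          ring
      have herase : ∑ x ∈ univ.erase u, π x = 1 - π u := by
        have := Finset.add_sum_erase univ π (Finset.mem_univ u)
        rw [hπ1] at this
        linarith
      rw [hcalc, herase] at h2
      linarith
    have hsing : ∀ u w : V, u = w := by
      intro u w
      by_contra hne'
      have h1 : π u + π w ≤ ∑ x, π x := by
        have : ({u, w} : Finset V) ⊆ univ := Finset.subset_univ _
        calc π u + π w = ∑ x ∈ ({u, w} : Finset V), π x := by
              rw [Finset.sum_pair hne']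
          _ ≤ ∑ x, π x :=
            Finset.sum_le_sum_of_subset_of_nonneg this (fun x _ _ => hπ0 x)
      rw [hπ1] at h1
      have := hπhalf u
      have := hπhalf w
      linarith
    haveI : Subsingleton V := ⟨hsing⟩
    have hzero : ∀ t : ℕ, Dtv (fun w => (P ^ t) v w) π = 0 := by
      intro t
      rw [hDS]
      have : S t v = 0 := by
        rw [hS]
        apply Finset.sum_eq_zero
        intro x _
        have hx : x = v := hsing x v
        subst hx
        have h1 : (P ^ t) x x = 1 := by
          have := hrow t x
          rwa [Fintype.sum_subsingleton (fun y => (P ^ t) x y) x] at this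
        have h2 : π x = 1 := by
          have := hπ1
          rwa [Fintype.sum_subsingleton π x] at this
        rw [h1, h2]; simp
      rw [this]; ring
    simp only [hzero, Finset.sum_const, smul_zero]
    rw [hτ0]
    simp
  · -- main case: τ ≥ 1
    have hτ1 : 1 ≤ τ := Nat.one_le_iff_ne_zero.2 hτ0
    -- decay of S at multiples of τ
    have hpow : ∀ k : ℕ, ∀ u : V, S ((k + 1) * τ) u ≤ 2 * γ * (2 * γ) ^ k := by
      intro k
      induction k with
      | zero => intro u; simpa using hSτ u
      | succ k ih =>
        intro u
        have heq : (k + 1 + 1) * τ = (k + 1) * τ + τ := by ring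
        rw [heq]
        calc S ((k + 1) * τ + τ) u
            ≤ (2 * γ) * S ((k + 1) * τ) u := hsub ((k + 1) * τ) τ u (2 * γ) hSτ
          _ ≤ (2 * γ) * (2 * γ * (2 * γ) ^ k) := by
              apply mul_le_mul_of_nonneg_left (ih u)
              linarith
          _ = 2 * γ * (2 * γ) ^ (k + 1) := by ring
    -- block decomposition sum bound
    have hblock : ∀ K : ℕ, ∑ t ∈ range ((K + 1) * τ), S t v
        ≤ 2 * τ + ∑ k ∈ range K, (τ : ℝ) * (2 * γ * (2 * γ) ^ k) := by
      intro K
      induction K with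
      | zero =>
        simp only [Finset.range_zero, Finset.sum_empty, add_zero]
        have h01 : (0 + 1) * τ = τ := by ring
        rw [h01]
        calc ∑ t ∈ range τ, S t v ≤ ∑ _t ∈ range τ, (2 : ℝ) :=
              Finset.sum_le_sum fun t _ => hSle2 t v
          _ = 2 * τ := by simp [mul_comm]
      | succ K ih =>
        have heq : (K + 1 + 1) * τ = (K + 1) * τ + τ := by ring
        rw [heq, Finset.sum_range_add]
        have h2 : ∑ r ∈ range τ, S ((K + 1) * τ + r) v ≤ (τ : ℝ) * (2 * γ * (2 * γ) ^ K) := by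
          calc ∑ r ∈ range τ, S ((K + 1) * τ + r) v
              ≤ ∑ _r ∈ range τ, (2 * γ * (2 * γ) ^ K) := by
                apply Finset.sum_le_sum
                intro r _
                exact (hmono ((K + 1) * τ) r v).trans (hpow K v)
            _ = (τ : ℝ) * (2 * γ * (2 * γ) ^ K) := by simp [mul_comm]
        rw [Finset.sum_range_succ]
        linarith
    -- geometric sum bound
    have hgeo : ∀ n : ℕ, ∑ k ∈ range n, (2 * γ) ^ k ≤ 1 / (1 - 2 * γ) := by
      intro n
      have h2γ : (2 : ℝ) * γ ≠ 1 := by linarith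
      have h1 : (0:ℝ) < 1 - 2 * γ := by linarith
      rw [le_div_iff₀ h1]
      have h := geom_sum_mul (2 * γ) n
      have hp : (0:ℝ) ≤ (2 * γ) ^ n := by positivity
      nlinarith [h, hp]
    -- put it together
    have hmain : ∑ t ∈ range T, S t v ≤ 2 * τ + 2 * τ * γ / (1 - 2 * γ) := by
      have hTτ : T ≤ T * τ := Nat.le_mul_of_pos_right T (by omega)
      have h1 : ∑ t ∈ range T, S t v ≤ ∑ t ∈ range (T * τ), S t v := by
        apply Finset.sum_le_sum_of_subset_of_nonneg
        · exact Finset.range_subset_range.2 hTτ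
        · intro t _ _; exact hS0 t v
      have hTeq : T * τ = ((T - 1) + 1) * τ := by
        congr 1; omega
      have h2 := hblock (T - 1)
      rw [← hTeq] at h2
      have h3 : ∑ k ∈ range (T - 1), (τ : ℝ) * (2 * γ * (2 * γ) ^ k)
          ≤ 2 * τ * γ / (1 - 2 * γ) := by
        have : ∑ k ∈ range (T - 1), (τ : ℝ) * (2 * γ * (2 * γ) ^ k)
            = 2 * τ * γ * ∑ k ∈ range (T - 1), (2 * γ) ^ k := by
          rw [Finset.mul_sum]
          congr 1; ext k; ring
        rw [this]
        have hg := hgeo (T - 1)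
        have hτpos : (0:ℝ) ≤ (τ : ℝ) := Nat.cast_nonneg τ
        have hfac : (0:ℝ) ≤ 2 * τ * γ := by positivity
        calc 2 * (τ:ℝ) * γ * ∑ k ∈ range (T - 1), (2 * γ) ^ k
            ≤ 2 * τ * γ * (1 / (1 - 2 * γ)) := mul_le_mul_of_nonneg_left hg hfac
          _ = 2 * τ * γ / (1 - 2 * γ) := by ring
      linarith
    have hfin : ∑ t ∈ range T, Dtv (fun w => (P ^ t) v w) π = (1 / 2) * ∑ t ∈ range T, S t v := by
      rw [Finset.mul_sum]
      apply Finset.sum_congr rfl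
      intro t _
      rw [hDS]
    rw [hfin]
    have h1 : (0:ℝ) < 1 - 2 * γ := by linarith
    have : (1 - γ) / (1 - 2 * γ) * τ = (1 / 2) * (2 * τ + 2 * τ * γ / (1 - 2 * γ)) := by
      have hx : (1 - 2 * γ)⁻¹ * (1 - 2 * γ) = 1 := inv_mul_cancel₀ h1.ne'
      simp only [div_eq_mul_inv]
      linear_combination (τ:ℝ) * hx
    rw [this]
    apply mul_le_mul_of_nonneg_left hmain
    norm_num
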